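/- If P is an integer-valued polynomial that is not identically zero, then ∑_{n=0}^∞ |P(n)|²·φ^{−2n} ≥ φ (the series converges since P has polynomial growth). -/

import Mathlib

/-- The golden ratio `(1 + √5)/2`. -/
noncomputable def phi : ℝ := (1 + Real.sqrt 5) / 2

/-- A real polynomial is integer-valued if it sends every integer to an integer. -/
def IsIVP (P : Polynomial ℝ) : Prop := ∀ n : ℤ, ∃ m : ℤ, P.eval (n : ℝ) = (m : ℝ)

namespace GoldenIVP

open Polynomial Finset

lemma sqrt5_sq : Real.sqrt 5 ^ 2 = 5 := Real.sq_sqrt (by norm_num)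

lemma sqrt5_gt_two : 2 < Real.sqrt 5 := by
  have := Real.lt_sqrt (x := 2) (y := 5) (by norm_num)
  rw [this]; norm_num

lemma phi_gt_one : 1 < phi := by
  have := sqrt5_gt_two; unfold phi; linarith

lemma phi_pos : 0 < phi := lt_trans one_pos phi_gt_one

lemma phi_ne_zero : phi ≠ 0 := ne_of_gt phi_pos

lemma phi_sq : phi ^ 2 = phi + 1 := by
  have h5 := sqrt5_sq
  unfold phi
  nlinarith [h5]

noncomputable def z : ℝ := phi⁻¹

lemma z_pos : 0 < z := inv_pos.mpr phi_pos
lemma z_ne_zero : z ≠ 0 := ne_of_gt z_pos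
lemma z_lt_one : z < 1 := by
  rw [z, inv_lt_one_iff₀]; right; exact phi_gt_one
lemma z_mul_phi : z * phi = 1 := inv_mul_cancel₀ phi_ne_zero

lemma z_sq : z ^ 2 = 1 - z := by
  have h := phi_sq
  have hz : z * phi = 1 := z_mul_phi
  have : z ^ 2 * (phi ^ 2) = 1 := by
    rw [← mul_pow, hz, one_pow]
  nlinarith [this, h, z_pos, phi_pos]

noncomputable def rr : ℝ := z ^ 2

lemma rr_pos : 0 < rr := pow_pos z_pos 2
lemma rr_nonneg : 0 ≤ rr := le_of_lt rr_pos
lemma rr_lt_one : rr < 1 := by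
  have := z_sq; have := z_pos; rw [rr]; linarith
lemma one_sub_rr : 1 - rr = z := by rw [rr, z_sq]; ring


/-- The binomial coefficient polynomial `binom(x, k)`. -/
noncomputable def binPoly (k : ℕ) : Polynomial ℝ :=
  Polynomial.C ((k.factorial : ℝ))⁻¹ * descPochhammer ℝ k

lemma binPoly_eval_nat (k n : ℕ) : (binPoly k).eval (n : ℝ) = (n.choose k : ℝ) := by
  have h := descPochhammer_eval_eq_descFactorial ℝ n k
  have hfact : (k.factorial : ℝ) ≠ 0 := by exact_mod_cast k.factorial_ne_zero
  rw [binPoly, eval_mul, eval_C, h, Nat.descFactorial_eq_factorial_mul_choose]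
  push_cast
  field_simp

lemma binPoly_zero : binPoly 0 = 1 := by
  simp [binPoly, descPochhammer_zero]

/-- forward difference operator on polynomials -/
noncomputable def dlt (P : Polynomial ℝ) : Polynomial ℝ := P.comp (X + 1) - P

lemma dlt_eval (P : Polynomial ℝ) (x : ℝ) : (dlt P).eval x = P.eval (x + 1) - P.eval x := by
  simp [dlt, eval_comp]

lemma dlt_IVP {P : Polynomial ℝ} (hP : IsIVP P) : IsIVP (dlt P) := by
  intro n
  obtain ⟨m1, hm1⟩ := hP (n + 1)
  obtain ⟨m2, hm2⟩ := hP n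
  refine ⟨m1 - m2, ?_⟩
  rw [dlt_eval]
  have : (n : ℝ) + 1 = ((n + 1 : ℤ) : ℝ) := by push_cast; ring
  rw [this, hm1, hm2]
  push_cast
  ring

lemma dlt_sum (s : Finset ℕ) (f : ℕ → Polynomial ℝ) :
    dlt (∑ i ∈ s, f i) = ∑ i ∈ s, dlt (f i) := by
  classical
  induction s using Finset.induction_on with
  | empty => simp [dlt]
  | @insert a s h ih => rw [Finset.sum_insert h, Finset.sum_insert h, ← ih]; simp [dlt]; ring

lemma natDegree_dlt_le (P : Polynomial ℝ) (N : ℕ) (h : P.natDegree ≤ N + 1) :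
    (dlt P).natDegree ≤ N := by
  have hrep : P = ∑ i ∈ range (N + 2), C (P.coeff i) * X ^ i := by
    have := P.as_sum_range' (N + 2) (by omega)
    simpa [Polynomial.C_mul_X_pow_eq_monomial] using this
  rw [hrep, dlt_sum]
  apply natDegree_sum_le_of_forall_le
  intro i hi
  have hterm : dlt (C (P.coeff i) * X ^ i) = C (P.coeff i) * ((X + 1) ^ i - X ^ i) := by
    simp [dlt]; ring
  rw [hterm]
  refine le_trans (natDegree_C_mul_le _ _) ?_
  -- (X+1)^i - X^i = ∑ k in range i, X^k * choose i k
  have hexp : ((X : Polynomial ℝ) + 1) ^ i - X ^ i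
      = ∑ k ∈ range i, X ^ k * (1 : Polynomial ℝ) ^ (i - k) * (i.choose k : Polynomial ℝ) := by
    rw [add_pow, Finset.sum_range_succ]
    simp
  rw [hexp]
  apply natDegree_sum_le_of_forall_le
  intro k hk
  simp only [one_pow, mul_one]
  refine le_trans (natDegree_mul_le) ?_
  have h1 : ((X : Polynomial ℝ) ^ k).natDegree = k := natDegree_X_pow k
  have h2 : ((i.choose k : Polynomial ℝ)).natDegree = 0 := natDegree_natCast _
  have hk' : k < i := mem_range.mp hk
  have hi' : i < N + 2 := mem_range.mp hi
  omega

/-- Newton representation with integer coefficients. -/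
lemma rep : ∀ (N : ℕ) (P : Polynomial ℝ), P.natDegree ≤ N → IsIVP P →
    ∃ c : ℕ → ℤ, P = ∑ k ∈ range (N + 1), C ((c k : ℝ)) * binPoly k := by
  intro N
  induction N with
  | zero =>
    intro P hdeg hP
    obtain ⟨m, hm⟩ := hP 0
    have hC := Polynomial.eq_C_of_natDegree_le_zero hdeg
    refine ⟨fun _ => m, ?_⟩
    rw [range_one, sum_singleton, binPoly_zero, mul_one, hC]
    congr 1
    have h0 : P.eval ((0:ℤ):ℝ) = P.coeff 0 := by rw [hC]; simp
    rw [← h0, hm]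
  | succ N ih =>
    intro P hdeg hP
    obtain ⟨c, hc⟩ := ih (dlt P) (natDegree_dlt_le P N hdeg) (dlt_IVP hP)
    obtain ⟨m0, hm0⟩ := hP 0
    refine ⟨fun k => match k with | 0 => m0 | (k+1) => c k, ?_⟩
    apply Polynomial.eq_of_infinite_eval_eq
    apply Set.infinite_of_injective_forall_mem (f := fun n : ℕ => (n : ℝ))
      (hi := fun a b hab => Nat.cast_injective hab)
    intro n
    simp only [Set.mem_setOf_eq]
    have hRHS : (∑ k ∈ range (N + 2),
          C (((match k with | 0 => m0 | (k+1) => c k : ℤ)) : ℝ) * binPoly k).eval (n:ℝ)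
        = (m0 : ℝ) + ∑ k ∈ range (N + 1), (c k : ℝ) * ((n.choose (k+1)) : ℝ) := by
      rw [eval_finset_sum, Finset.sum_range_succ']
      simp only [eval_mul, eval_C, binPoly_eval_nat, binPoly_zero, eval_one, mul_one]
      rw [add_comm]
    have key : ∀ n : ℕ, P.eval (n : ℝ)
        = (m0 : ℝ) + ∑ k ∈ range (N + 1), (c k : ℝ) * ((n.choose (k+1)) : ℝ) := by
      intro n
      induction n with
      | zero =>
        have h1 : ∀ k, ((0:ℕ).choose (k+1) : ℝ) = 0 := by
          intro k; rw [Nat.choose_eq_zero_of_lt (Nat.succ_pos k)]; norm_num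
        have : P.eval ((0 : ℤ) : ℝ) = (m0 : ℝ) := hm0
        simp only [Int.cast_zero] at this
        rw [Nat.cast_zero, this]
        rw [Finset.sum_congr rfl (fun k _ => by rw [h1 k, mul_zero])]
        simp
      | succ n ihn =>
        have hdlt : P.eval ((n : ℝ) + 1) = P.eval (n : ℝ) + (dlt P).eval (n : ℝ) := by
          rw [dlt_eval]; ring
        have hdltval : (dlt P).eval (n : ℝ) = ∑ k ∈ range (N + 1), (c k : ℝ) * ((n.choose k) : ℝ) := by
          rw [hc, eval_finset_sum]
          simp [binPoly_eval_nat]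
        have hcast : ((n + 1 : ℕ) : ℝ) = (n : ℝ) + 1 := by push_cast; ring
        rw [hcast, hdlt, ihn, hdltval]
        rw [add_assoc, ← Finset.sum_add_distrib]
        congr 1
        apply Finset.sum_congr rfl
        intro k hk
        have hch : ((n+1).choose (k+1) : ℝ) = (n.choose k : ℝ) + (n.choose (k+1) : ℝ) := by
          rw [Nat.choose_succ_succ]; push_cast; ring
        rw [hch]
        ring
    rw [key n, ← hRHS]


/-- summability of `C(n,j) C(n,k) r^n` -/
lemma summable_JK (j k : ℕ) :
    Summable (fun n : ℕ => (n.choose j : ℝ) * (n.choose k : ℝ) * rr ^ n) := by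
  have hg : Summable (fun n : ℕ => (n : ℝ) ^ (j + k) * rr ^ n) := by
    have : ‖rr‖ < 1 := by rw [Real.norm_eq_abs, abs_of_nonneg rr_nonneg]; exact rr_lt_one
    exact summable_pow_mul_geometric_of_norm_lt_one (j + k) this
  apply Summable.of_nonneg_of_le _ _ hg
  · intro n
    exact mul_nonneg (mul_nonneg (by positivity) (by positivity)) (pow_nonneg rr_nonneg n)
  · intro n
    have h1 : (n.choose j : ℝ) ≤ (n : ℝ) ^ j := by
      exact_mod_cast Nat.cast_le.mpr (Nat.choose_le_pow n j)
  -- fallback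
    have h2 : (n.choose k : ℝ) ≤ (n : ℝ) ^ k := by
      exact_mod_cast Nat.cast_le.mpr (Nat.choose_le_pow n k)
    have hr : (0:ℝ) ≤ rr ^ n := pow_nonneg rr_nonneg n
    have hcj : (0:ℝ) ≤ (n.choose j : ℝ) := by positivity
    have hck : (0:ℝ) ≤ (n.choose k : ℝ) := by positivity
    have := mul_le_mul h1 h2 hck (by positivity : (0:ℝ) ≤ (n:ℝ)^j)
    calc (n.choose j : ℝ) * (n.choose k : ℝ) * rr ^ n
        ≤ ((n:ℝ)^j * (n:ℝ)^k) * rr ^ n := by nlinarith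
      _ = (n : ℝ) ^ (j + k) * rr ^ n := by rw [pow_add]

noncomputable def T (j k : ℕ) : ℝ := ∑' n : ℕ, (n.choose j : ℝ) * (n.choose k : ℝ) * rr ^ n

lemma T_symm (j k : ℕ) : T j k = T k j := tsum_congr fun n => by ring

lemma T_zero_zero : T 0 0 = phi := by
  have : T 0 0 = ∑' n : ℕ, rr ^ n := tsum_congr fun n => by simp
  rw [this, tsum_geometric_of_lt_one rr_nonneg rr_lt_one, one_sub_rr]
  rw [z]
  simp

lemma T_succ_zero (j : ℕ) : T (j + 1) 0 = z * T j 0 := by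
  have hs : Summable (fun n : ℕ => (n.choose (j+1) : ℝ) * (n.choose 0 : ℝ) * rr ^ n) :=
    summable_JK (j+1) 0
  have h0 : ((0:ℕ).choose (j+1) : ℝ) * ((0:ℕ).choose 0 : ℝ) * rr ^ 0 = 0 := by
    simp [Nat.choose_eq_zero_of_lt (Nat.succ_pos j)]
  have hshift : ∀ n : ℕ, ((n+1).choose (j+1) : ℝ) * ((n+1).choose 0 : ℝ) * rr ^ (n+1)
      = rr * ((n.choose j : ℝ) * (n.choose 0 : ℝ) * rr ^ n)
        + rr * ((n.choose (j+1) : ℝ) * (n.choose 0 : ℝ) * rr ^ n) := by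
    intro n
    simp only [Nat.choose_succ_succ, Nat.choose_zero_right]
    push_cast
    ring
  have htail : (∑' n : ℕ, ((n+1).choose (j+1) : ℝ) * ((n+1).choose 0 : ℝ) * rr ^ (n+1))
      = rr * T j 0 + rr * T (j+1) 0 := by
    calc (∑' n : ℕ, ((n+1).choose (j+1) : ℝ) * ((n+1).choose 0 : ℝ) * rr ^ (n+1))
        = ∑' n : ℕ, (rr * ((n.choose j : ℝ) * (n.choose 0 : ℝ) * rr ^ n)
          + rr * ((n.choose (j+1) : ℝ) * (n.choose 0 : ℝ) * rr ^ n)) := tsum_congr hshift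
      _ = rr * T j 0 + rr * T (j+1) 0 := by
          rw [Summable.tsum_add ((summable_JK j 0).mul_left rr) ((summable_JK (j+1) 0).mul_left rr),
            tsum_mul_left, tsum_mul_left]
          rfl
  have heq : T (j+1) 0 = rr * T j 0 + rr * T (j+1) 0 := by
    have h := Summable.tsum_eq_zero_add hs
    rw [h0, zero_add] at h
    exact h.trans htail
  have h2 : z * T (j+1) 0 = rr * T j 0 := by
    have h3 : (1 - rr) * T (j+1) 0 = rr * T j 0 := by linarith [heq]
    rw [one_sub_rr] at h3; exact h3
  have h4 : z * T (j+1) 0 = z * (z * T j 0) := by rw [h2, rr]; ring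
  exact mul_left_cancel₀ z_ne_zero h4

lemma T_succ_succ (j k : ℕ) :
    T (j+1) (k+1) = z * (T j (k+1) + T (j+1) k + T j k) := by
  have hs : Summable (fun n : ℕ => (n.choose (j+1) : ℝ) * (n.choose (k+1) : ℝ) * rr ^ n) :=
    summable_JK (j+1) (k+1)
  have h0 : ((0:ℕ).choose (j+1) : ℝ) * ((0:ℕ).choose (k+1) : ℝ) * rr ^ 0 = 0 := by
    simp [Nat.choose_eq_zero_of_lt (Nat.succ_pos j)]
  have hshift : ∀ n : ℕ, ((n+1).choose (j+1) : ℝ) * ((n+1).choose (k+1) : ℝ) * rr ^ (n+1)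
      = rr * ((n.choose j : ℝ) * (n.choose (k+1) : ℝ) * rr ^ n)
        + (rr * ((n.choose (j+1) : ℝ) * (n.choose k : ℝ) * rr ^ n)
        + (rr * ((n.choose j : ℝ) * (n.choose k : ℝ) * rr ^ n)
        + rr * ((n.choose (j+1) : ℝ) * (n.choose (k+1) : ℝ) * rr ^ n))) := by
    intro n
    simp only [Nat.choose_succ_succ]
    push_cast
    ring
  have htail : (∑' n : ℕ, ((n+1).choose (j+1) : ℝ) * ((n+1).choose (k+1) : ℝ) * rr ^ (n+1))
      = rr * T j (k+1) + (rr * T (j+1) k + (rr * T j k + rr * T (j+1) (k+1))) := by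
    calc (∑' n : ℕ, ((n+1).choose (j+1) : ℝ) * ((n+1).choose (k+1) : ℝ) * rr ^ (n+1))
        = ∑' n : ℕ, (rr * ((n.choose j : ℝ) * (n.choose (k+1) : ℝ) * rr ^ n)
          + (rr * ((n.choose (j+1) : ℝ) * (n.choose k : ℝ) * rr ^ n)
          + (rr * ((n.choose j : ℝ) * (n.choose k : ℝ) * rr ^ n)
          + rr * ((n.choose (j+1) : ℝ) * (n.choose (k+1) : ℝ) * rr ^ n)))) := tsum_congr hshift
      _ = rr * T j (k+1) + (rr * T (j+1) k + (rr * T j k + rr * T (j+1) (k+1))) := by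
          rw [Summable.tsum_add ((summable_JK j (k+1)).mul_left rr)
            (((summable_JK (j+1) k).mul_left rr).add
              (((summable_JK j k).mul_left rr).add ((summable_JK (j+1) (k+1)).mul_left rr)))]
          rw [Summable.tsum_add ((summable_JK (j+1) k).mul_left rr)
            (((summable_JK j k).mul_left rr).add ((summable_JK (j+1) (k+1)).mul_left rr))]
          rw [Summable.tsum_add ((summable_JK j k).mul_left rr) ((summable_JK (j+1) (k+1)).mul_left rr)]
          rw [tsum_mul_left, tsum_mul_left, tsum_mul_left, tsum_mul_left]
          rfl
  have heq : T (j+1) (k+1) = rr * T j (k+1) + (rr * T (j+1) k + (rr * T j k + rr * T (j+1) (k+1))) := by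
    have h := Summable.tsum_eq_zero_add hs
    rw [h0, zero_add] at h
    exact h.trans htail
  have h2 : z * T (j+1) (k+1) = rr * (T j (k+1) + T (j+1) k + T j k) := by
    have h3 : (1 - rr) * T (j+1) (k+1) = rr * (T j (k+1) + T (j+1) k + T j k) := by
      linarith [heq]
    rw [one_sub_rr] at h3; exact h3
  have h4 : z * T (j+1) (k+1) = z * (z * (T j (k+1) + T (j+1) k + T j k)) := by
    rw [h2, rr]; ring
  exact mul_left_cancel₀ z_ne_zero h4


/-- entries of the triangular factor -/
noncomputable def L (k m : ℕ) : ℝ := (k.choose m : ℝ) * z ^ (k - m)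

lemma L_eq_zero {k m : ℕ} (h : k < m) : L k m = 0 := by
  rw [L, Nat.choose_eq_zero_of_lt h]; norm_num

lemma L_zero_right (k : ℕ) : L k 0 = z ^ k := by simp [L]

lemma L_diag (k : ℕ) : L k k = 1 := by simp [L]

lemma L_succ_zero (j : ℕ) : L (j+1) 0 = z * L j 0 := by
  rw [L_zero_right, L_zero_right, pow_succ]; ring

lemma L_succ_succ (j m : ℕ) : L (j+1) (m+1) = z * L j (m+1) + L j m := by
  by_cases h : m + 1 ≤ j
  · rw [L, L, L, Nat.choose_succ_succ, Nat.succ_sub_succ]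
    have h1 : j - m = (j - (m+1)) + 1 := by omega
    rw [h1, pow_succ]
    push_cast
    ring
  · by_cases h2 : m = j
    · subst h2
      rw [L_diag, L, Nat.choose_eq_zero_of_lt (by omega), L_diag]
      norm_num
    · have hj : j < m := by omega
      rw [L_eq_zero (by omega), L_eq_zero (by omega), L_eq_zero hj]
      ring

lemma sum_L_ext1_le (j : ℕ) (g : ℕ → ℝ) {M M' : ℕ} (hM : j < M) (hle : M ≤ M') :
    ∑ m ∈ Finset.range M', L j m * g m = ∑ m ∈ Finset.range M, L j m * g m := by
  refine (Finset.sum_subset (Finset.range_subset_range.mpr hle) ?_).symm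
  intro x _ hx
  rw [L_eq_zero (by simp only [Finset.mem_range, not_lt] at hx; omega)]
  ring

lemma sum_L_ext1 (j : ℕ) (g : ℕ → ℝ) {M M' : ℕ} (hM : j < M) (hM' : j < M') :
    ∑ m ∈ Finset.range M, L j m * g m = ∑ m ∈ Finset.range M', L j m * g m := by
  rcases le_total M M' with h | h
  · exact (sum_L_ext1_le j g hM h).symm
  · exact sum_L_ext1_le j g hM' h

lemma sum_L_ext2_le (j : ℕ) (g : ℕ → ℝ) {M M' : ℕ} (hM : j ≤ M) (hle : M ≤ M') :
    ∑ m ∈ Finset.range M', L j (m+1) * g m = ∑ m ∈ Finset.range M, L j (m+1) * g m := by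
  refine (Finset.sum_subset (Finset.range_subset_range.mpr hle) ?_).symm
  intro x _ hx
  rw [L_eq_zero (by simp only [Finset.mem_range, not_lt] at hx; omega)]
  ring

lemma sum_L_ext2 (j : ℕ) (g : ℕ → ℝ) {M M' : ℕ} (hM : j ≤ M) (hM' : j ≤ M') :
    ∑ m ∈ Finset.range M, L j (m+1) * g m = ∑ m ∈ Finset.range M', L j (m+1) * g m := by
  rcases le_total M M' with h | h
  · exact (sum_L_ext2_le j g hM h).symm
  · exact sum_L_ext2_le j g hM' h

/-- finite Gram sum -/
noncomputable def HS (j k : ℕ) : ℝ := ∑ m ∈ Finset.range (j+1), L j m * L k m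

lemma HS_right_zero (j : ℕ) : HS j 0 = z ^ j := by
  rw [HS]
  rw [Finset.sum_eq_single_of_mem 0 (by simp)]
  · rw [L_zero_right, L_zero_right, pow_zero, mul_one]
  · intro m _ hm
    have : (0:ℕ) < m := Nat.pos_of_ne_zero hm
    rw [L_eq_zero (k := 0) (by omega)]
    ring

lemma HS_left_zero (k : ℕ) : HS 0 k = z ^ k := by
  rw [HS, Finset.range_one, Finset.sum_singleton, L_diag, L_zero_right, one_mul]

lemma Hrec (j k : ℕ) : HS (j+1) (k+1) = z * (HS j (k+1) + HS (j+1) k + HS j k) := by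
  set A := HS j k with hA
  set c := L j 0 * L k 0 with hc
  set PP := ∑ m ∈ Finset.range (j+1), L j (m+1) * L k (m+1) with hPPdef
  set X := ∑ m ∈ Finset.range (j+1), L j (m+1) * L k m with hX
  set Y := ∑ m ∈ Finset.range (j+1), L j m * L k (m+1) with hY
  -- PP + c = A
  have hPP : PP + c = A := by
    have h1 : ∑ m ∈ Finset.range (j+2), L j m * L k m
        = ∑ m ∈ Finset.range (j+1), L j (m+1) * L k (m+1) + L j 0 * L k 0 := by
      exact Finset.sum_range_succ' (fun m => L j m * L k m) (j+1)
    have h2 : ∑ m ∈ Finset.range (j+2), L j m * L k m = A := by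
      rw [hA, HS]
      exact sum_L_ext1 j (fun m => L k m) (by omega) (by omega)
    rw [← h1, h2]
  -- expansion of LHS
  have h1 : HS (j+1) (k+1) = z^2 * PP + (z * X + (z * Y + A)) + z^2 * c := by
    rw [HS, Finset.sum_range_succ' (fun m => L (j+1) m * L (k+1) m) (j+1)]
    have e1 : ∀ m ∈ Finset.range (j+1), L (j+1) (m+1) * L (k+1) (m+1)
        = z^2 * (L j (m+1) * L k (m+1)) + (z * (L j (m+1) * L k m)
          + (z * (L j m * L k (m+1)) + L j m * L k m)) := by
      intro m _
      rw [L_succ_succ, L_succ_succ]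
      ring
    rw [Finset.sum_congr rfl e1]
    rw [Finset.sum_add_distrib, Finset.sum_add_distrib, Finset.sum_add_distrib]
    rw [← Finset.mul_sum, ← Finset.mul_sum, ← Finset.mul_sum]
    rw [L_succ_zero, L_succ_zero]
    rw [← hPPdef, ← hX, ← hY, ← HS, ← hA, hc]
    ring
  -- HS j (k+1) = z * A + X
  have h3 : HS j (k+1) = z * A + X := by
    rw [HS, Finset.sum_range_succ' (fun m => L j m * L (k+1) m) j]
    have e1 : ∀ m ∈ Finset.range j, L j (m+1) * L (k+1) (m+1)
        = z * (L j (m+1) * L k (m+1)) + L j (m+1) * L k m := by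
      intro m _
      rw [L_succ_succ]
      ring
    rw [Finset.sum_congr rfl e1, Finset.sum_add_distrib, ← Finset.mul_sum]
    rw [sum_L_ext2 j (fun m => L k (m+1)) (le_refl j) (by omega : j ≤ j+1)]
    rw [sum_L_ext2 j (fun m => L k m) (le_refl j) (by omega : j ≤ j+1)]
    rw [L_succ_zero]
    rw [← hPPdef, ← hX]
    have : z * PP + X + L j 0 * (z * L k 0) = z * (PP + c) + X := by rw [hc]; ring
    rw [this, hPP]
  -- HS (j+1) k = z * A + Y
  have h4 : HS (j+1) k = z * A + Y := by
    rw [HS, Finset.sum_range_succ' (fun m => L (j+1) m * L k m) (j+1)]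
    have e1 : ∀ m ∈ Finset.range (j+1), L (j+1) (m+1) * L k (m+1)
        = z * (L j (m+1) * L k (m+1)) + L j m * L k (m+1) := by
      intro m _
      rw [L_succ_succ]
      ring
    rw [Finset.sum_congr rfl e1, Finset.sum_add_distrib, ← Finset.mul_sum]
    rw [L_succ_zero]
    rw [← hPPdef, ← hY]
    have : z * PP + Y + z * L j 0 * L k 0 = z * (PP + c) + Y := by rw [hc]; ring
    rw [this, hPP]
  rw [h1, h3, h4]
  linear_combination z^2 * hPP - A * z_sq

/-- The master identity. -/
lemma T_eq (j k : ℕ) : T j k = phi * HS j k := by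
  have main : ∀ s : ℕ, ∀ j k : ℕ, j + k ≤ s → T j k = phi * HS j k := by
    intro s
    induction s with
    | zero =>
      intro j k h
      have hj : j = 0 := by omega
      have hk : k = 0 := by omega
      subst hj; subst hk
      rw [T_zero_zero, HS_left_zero, pow_zero, mul_one]
    | succ s ih =>
      intro j k h
      match j, k with
      | 0, 0 => rw [T_zero_zero, HS_left_zero, pow_zero, mul_one]
      | (j+1), 0 =>
        rw [T_succ_zero j, ih j 0 (by omega), HS_right_zero, HS_right_zero, pow_succ]
        ring
      | 0, (k+1) =>
        rw [T_symm 0 (k+1), T_succ_zero k, T_symm k 0, ih 0 k (by omega),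
          HS_left_zero, HS_left_zero, pow_succ]
        ring
      | (j+1), (k+1) =>
        rw [T_succ_succ j k, ih j (k+1) (by omega), ih (j+1) k (by omega), ih j k (by omega),
          Hrec j k]
        ring
  exact main (j + k) j k le_rfl


end GoldenIVP

/-- If `P` is a nonzero integer-valued polynomial then `∑_{n≥0} |P(n)|² φ^{-2n} ≥ φ`. -/
theorem stmt_1 (P : Polynomial ℝ) (hP : IsIVP P) (hne : P ≠ 0) :
    phi ≤ ∑' n : ℕ, (P.eval (n : ℝ)) ^ 2 / phi ^ (2 * n) := by
  classical
  open Polynomial Finset GoldenIVP in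
  obtain ⟨c, hc⟩ := GoldenIVP.rep P.natDegree P le_rfl hP
  set M := P.natDegree + 1 with hMdef
  -- evaluation formula
  have hev : ∀ n : ℕ, P.eval (n : ℝ) = ∑ k ∈ Finset.range M, (c k : ℝ) * (n.choose k : ℝ) := by
    intro n
    rw [hc, Polynomial.eval_finset_sum]
    exact Finset.sum_congr rfl fun k _ => by
      rw [Polynomial.eval_mul, Polynomial.eval_C, GoldenIVP.binPoly_eval_nat]
  -- top nonzero coefficient
  have hex : ∃ k ∈ Finset.range M, c k ≠ 0 := by
    by_contra hcon
    push_neg at hcon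
    apply hne
    rw [hc]
    apply Finset.sum_eq_zero
    intro k hk
    rw [hcon k hk]
    simp
  set s : Finset ℕ := (Finset.range M).filter (fun k => c k ≠ 0) with hsdef
  have hsne : s.Nonempty := by
    obtain ⟨k, hk1, hk2⟩ := hex
    exact ⟨k, by simp [hsdef, Finset.mem_filter, hk1, hk2]⟩
  set D := s.max' hsne with hDdef
  have hDs : D ∈ s := s.max'_mem hsne
  have hDmem : D ∈ Finset.range M := (Finset.mem_filter.mp hDs).1
  have hDne : c D ≠ 0 := (Finset.mem_filter.mp hDs).2
  have hDmax : ∀ k ∈ Finset.range M, D < k → c k = 0 := by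
    intro k hk hlt
    by_contra hne2
    exact absurd (s.le_max' k (Finset.mem_filter.mpr ⟨hk, hne2⟩)) (not_le.mpr hlt)
  -- rewrite each term of the series
  have hterm : ∀ n : ℕ, (P.eval (n:ℝ))^2 / phi^(2*n)
      = ∑ j ∈ Finset.range M, ∑ k ∈ Finset.range M,
          (c j : ℝ) * (c k : ℝ) * ((n.choose j : ℝ) * (n.choose k : ℝ) * GoldenIVP.rr ^ n) := by
    intro n
    have hrrn : GoldenIVP.rr ^ n = (phi ^ (2*n))⁻¹ := by
      rw [GoldenIVP.rr, GoldenIVP.z, ← pow_mul, inv_pow]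
    rw [hev n, div_eq_mul_inv, ← hrrn, sq, Finset.sum_mul_sum]
    rw [Finset.sum_mul]
    refine Finset.sum_congr rfl fun j _ => ?_
    rw [Finset.sum_mul]
    exact Finset.sum_congr rfl fun k _ => by ring
  have hsum1 : ∀ j k : ℕ, Summable (fun n : ℕ =>
      (c j : ℝ) * (c k : ℝ) * ((n.choose j : ℝ) * (n.choose k : ℝ) * GoldenIVP.rr ^ n)) :=
    fun j k => (GoldenIVP.summable_JK j k).mul_left _
  -- the series equals the Gram double sum
  have hS : (∑' n : ℕ, (P.eval (n:ℝ))^2 / phi^(2*n))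
      = ∑ j ∈ Finset.range M, ∑ k ∈ Finset.range M, (c j : ℝ) * (c k : ℝ) * GoldenIVP.T j k := by
    rw [tsum_congr hterm]
    rw [Summable.tsum_finsetSum (fun j _ => summable_sum (fun k _ => hsum1 j k))]
    refine Finset.sum_congr rfl fun j _ => ?_
    rw [Summable.tsum_finsetSum (fun k _ => hsum1 j k)]
    refine Finset.sum_congr rfl fun k _ => ?_
    rw [tsum_mul_left]
    rfl
  -- T in terms of the common-range finite sums
  have hQT : ∀ j ∈ Finset.range M, ∀ k ∈ Finset.range M,
      GoldenIVP.T j k = phi * ∑ m ∈ Finset.range M, GoldenIVP.L j m * GoldenIVP.L k m := by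
    intro j hj k hk
    rw [GoldenIVP.T_eq j k, GoldenIVP.HS]
    congr 1
    exact GoldenIVP.sum_L_ext1 j (fun m => GoldenIVP.L k m) (Nat.lt_succ_self j)
      (Finset.mem_range.mp hj)
  set Q : ℕ → ℝ := fun m => ∑ k ∈ Finset.range M, (c k : ℝ) * GoldenIVP.L k m with hQdef
  have halg : ∑ j ∈ Finset.range M, ∑ k ∈ Finset.range M, (c j : ℝ) * (c k : ℝ) * GoldenIVP.T j k
      = phi * ∑ m ∈ Finset.range M, (Q m)^2 := by
    calc ∑ j ∈ Finset.range M, ∑ k ∈ Finset.range M, (c j : ℝ) * (c k : ℝ) * GoldenIVP.T j k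
        = ∑ j ∈ Finset.range M, ∑ k ∈ Finset.range M, ∑ m ∈ Finset.range M,
            phi * (((c j : ℝ) * GoldenIVP.L j m) * ((c k : ℝ) * GoldenIVP.L k m)) := by
          refine Finset.sum_congr rfl fun j hj => Finset.sum_congr rfl fun k hk => ?_
          rw [hQT j hj k hk, Finset.mul_sum, Finset.mul_sum]
          exact Finset.sum_congr rfl fun m _ => by ring
      _ = ∑ m ∈ Finset.range M, ∑ j ∈ Finset.range M, ∑ k ∈ Finset.range M,
            phi * (((c j : ℝ) * GoldenIVP.L j m) * ((c k : ℝ) * GoldenIVP.L k m)) := by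
          have h1 : ∀ j : ℕ, (∑ k ∈ Finset.range M, ∑ m ∈ Finset.range M,
              phi * (((c j : ℝ) * GoldenIVP.L j m) * ((c k : ℝ) * GoldenIVP.L k m)))
              = ∑ m ∈ Finset.range M, ∑ k ∈ Finset.range M,
              phi * (((c j : ℝ) * GoldenIVP.L j m) * ((c k : ℝ) * GoldenIVP.L k m)) :=
            fun j => Finset.sum_comm
          rw [Finset.sum_congr rfl fun j _ => h1 j]
          exact Finset.sum_comm
      _ = phi * ∑ m ∈ Finset.range M, (Q m)^2 := by
          rw [Finset.mul_sum]
          refine Finset.sum_congr rfl fun m _ => ?_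
          have hQsq : (Q m)^2 = ∑ j ∈ Finset.range M, ∑ k ∈ Finset.range M,
              ((c j : ℝ) * GoldenIVP.L j m) * ((c k : ℝ) * GoldenIVP.L k m) := by
            rw [sq]; exact Finset.sum_mul_sum _ _ _ _
          rw [hQsq, Finset.mul_sum]
          exact Finset.sum_congr rfl fun j _ => by rw [Finset.mul_sum]
  -- the top square is c D ^ 2 ≥ 1
  have hQD : Q D = (c D : ℝ) := by
    show (∑ k ∈ Finset.range M, (c k : ℝ) * GoldenIVP.L k D) = (c D : ℝ)
    rw [Finset.sum_eq_single D]
    · rw [GoldenIVP.L_diag, mul_one]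
    · intro k hk hne2
      rcases lt_or_gt_of_ne hne2 with h | h
      · rw [GoldenIVP.L_eq_zero h]; ring
      · rw [hDmax k hk h]; norm_num
    · intro hD; exact absurd hDmem hD
  have h1le : (1:ℝ) ≤ (Q D)^2 := by
    rw [hQD]
    have h1 : (1:ℤ) ≤ (c D)^2 := by
      rcases lt_or_gt_of_ne hDne with h | h
      · nlinarith
      · nlinarith
    exact_mod_cast h1
  have hsum_ge : (Q D)^2 ≤ ∑ m ∈ Finset.range M, (Q m)^2 :=
    Finset.single_le_sum (fun m _ => sq_nonneg (Q m)) hDmem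
  rw [hS, halg]
  calc phi = phi * 1 := (mul_one phi).symm
    _ ≤ phi * ∑ m ∈ Finset.range M, (Q m)^2 := by
        apply mul_le_mul_of_nonneg_left _ (le_of_lt GoldenIVP.phi_pos)
        linarith [h1le, hsum_ge]
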